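/- Let R be a left noetherian ring, 𝐭 a torsion class in R-mod (closed under quotients and extensions among finitely generated modules), and let ℱ = 𝐭^{⊥₀} = {M ∈ R-Mod : Hom(U, M) = 0 for all U ∈ 𝐭}. If S is a finitely generated module that is minimal extending for (𝐭, 𝐟 = ℱ ∩ R-mod) — i.e., S ∈ 𝐟, every proper quotient of S is in 𝐭, and every non-split extension 0 → S → P → T → 0 in R-mod with T ∈ 𝐭 has P ∈ 𝐭 — then for every short exact sequence 0 → S → F → M → 0 in R-Mod with F ∈ ℱ, also M ∈ ℱ. -/

import Mathlib

universe u v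

/-- Let `R` be a left noetherian ring and `t` a torsion class in `R`-mod: a class of
finitely generated modules closed under quotients and extensions.  Let
`ℱ = t^{⊥₀}` be the corresponding definable torsionfree class in `R`-Mod.  If `S` is
a finitely generated minimal extending module for `(t, 𝐟)` — `S` is torsionfree,
every proper quotient of `S` lies in `t`, and every non-split extension
`0 → S → P → T → 0` of finitely generated modules with `T ∈ t` has `P ∈ t` — then
for every short exact sequence `0 → S → F → M → 0` in `R`-Mod with `F ∈ ℱ`, also
`M ∈ ℱ`. -/
theorem stmt_18 (R : Type u) [Ring R] [IsNoetherianRing R]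
    (t : Set (ModuleCat.{v} R))
    (hfin : ∀ U ∈ t, Module.Finite R ↑U)
    (hquot : ∀ U ∈ t, ∀ N : Submodule R ↑U, ModuleCat.of R (↑U ⧸ N) ∈ t)
    (hext : ∀ (A B : ModuleCat.{v} R), A ∈ t → B ∈ t →
      ∀ (E : ModuleCat.{v} R), Module.Finite R ↑E →
      ∀ (i : ↑A →ₗ[R] ↑E) (p : ↑E →ₗ[R] ↑B),
        Function.Injective i → Function.Surjective p →
        LinearMap.range i = LinearMap.ker p → E ∈ t)
    (ℱ : Set (ModuleCat.{v} R))
    (hℱ : ℱ = {M : ModuleCat.{v} R | ∀ U ∈ t, ∀ f : ↑U →ₗ[R] ↑M, f = 0})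
    (S : ModuleCat.{v} R) (hSfin : Module.Finite R ↑S) (hS0 : Nontrivial ↑S)
    (hSf : S ∈ ℱ)
    (hSquot : ∀ N : Submodule R ↑S, N ≠ ⊥ → ModuleCat.of R (↑S ⧸ N) ∈ t)
    (hSext : ∀ T ∈ t, ∀ (P : ModuleCat.{v} R), Module.Finite R ↑P →
      ∀ (i : ↑S →ₗ[R] ↑P) (p : ↑P →ₗ[R] ↑T),
        Function.Injective i → Function.Surjective p →
        LinearMap.range i = LinearMap.ker p →
        (¬ ∃ s : ↑T →ₗ[R] ↑P, p ∘ₗ s = LinearMap.id) → P ∈ t) :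
    ∀ F ∈ ℱ, ∀ (M : ModuleCat.{v} R), ∀ (i : ↑S →ₗ[R] ↑F) (q : ↑F →ₗ[R] ↑M),
      Function.Injective i → Function.Surjective q →
      LinearMap.range i = LinearMap.ker q → M ∈ ℱ := by

  subst hℱ
  intro F hF M i q hi hq hiq
  intro U hU f
  -- pullback E ⊆ U × F
  set E : Submodule R (↥U × ↥F) :=
    { carrier := {p | f p.1 = q p.2}
      add_mem' := by intro a b ha hb; simp only [Set.mem_setOf_eq] at *; simp [ha, hb]
      zero_mem' := by simp
      smul_mem' := by intro c a ha; simp only [Set.mem_setOf_eq] at *; simp [ha] } with hE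
  have memE : ∀ p : ↥U × ↥F, p ∈ E ↔ f p.1 = q p.2 := fun p => Iff.rfl
  -- maps
  set i' : ↥S →ₗ[R] ↥E :=
    { toFun := fun s => ⟨(0, i s), by
        show f 0 = q (i s)
        have : i s ∈ LinearMap.ker q := hiq ▸ LinearMap.mem_range_self i s
        simp [LinearMap.mem_ker.mp this]⟩
      map_add' := by intro a b; ext <;> simp
      map_smul' := by intro c a; ext <;> simp } with hi'def
  set p' : ↥E →ₗ[R] ↥U := (LinearMap.fst R ↥U ↥F) ∘ₗ E.subtype with hp'def
  have hii' : Function.Injective i' := by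
    intro a b hab
    apply hi
    have := congrArg (fun x : ↥E => (x : ↥U × ↥F).2) hab
    exact this
  have hpp' : Function.Surjective p' := by
    intro u
    obtain ⟨x, hx⟩ := hq (f u)
    exact ⟨⟨(u, x), hx.symm⟩, rfl⟩
  have hrk : LinearMap.range i' = LinearMap.ker p' := by
    apply le_antisymm
    · rintro _ ⟨s, rfl⟩
      simp [hp'def, hi'def]
    · rintro ⟨⟨u, x⟩, hux⟩ h
      have hu : u = 0 := h
      have hx : q x = 0 := by
        have := (memE (u, x)).mp hux
        simp [hu] at this
        exact this.symm
      have : x ∈ LinearMap.range i := hiq ▸ LinearMap.mem_ker.mpr hx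
      obtain ⟨s, hs⟩ := this
      refine ⟨s, ?_⟩
      ext <;> simp [hi'def, hs, hu]
  -- E is finitely generated
  have hEfin : Module.Finite R ↥E := by
    rw [Module.finite_def]
    have h1 : (Submodule.map p' (⊤ : Submodule R ↥E)).FG := by
      have : Module.Finite R ↥U := hfin U hU
      exact (IsNoetherian.noetherian _)
    have h2 : ((⊤ : Submodule R ↥E) ⊓ LinearMap.ker p').FG := by
      rw [top_inf_eq, ← hrk]
      exact Module.Finite.iff_fg.mp (Module.Finite.range i')
    exact Submodule.fg_of_fg_map_of_fg_inf_ker p' h1 h2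
  -- snd map E → F
  set g : ↥E →ₗ[R] ↥F := (LinearMap.snd R ↥U ↥F) ∘ₗ E.subtype with hgdef
  by_cases hsplit : ∃ s : ↥U →ₗ[R] ↥E, p' ∘ₗ s = LinearMap.id
  · obtain ⟨s, hs⟩ := hsplit
    have hgs : g ∘ₗ s = 0 := hF U hU (g ∘ₗ s)
    ext u
    have h1 : (s u : ↥U × ↥F).1 = u := congrArg (fun h => h u) hs
    have h2 : (s u : ↥U × ↥F).2 = 0 := congrArg (fun h => h u) hgs
    have := (memE (s u : ↥U × ↥F)).mp (s u).2
    rw [h1, h2] at this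
    simpa using this
  · have hEt : ModuleCat.of R ↥E ∈ t :=
      hSext U hU (ModuleCat.of R ↥E) hEfin i' p' hii' hpp' hrk hsplit
    have hg0 : g = 0 := hF (ModuleCat.of R ↥E) hEt g
    ext u
    obtain ⟨x, hx⟩ := hq (f u)
    have hmem : ((u, x) : ↥U × ↥F) ∈ E := hx.symm
    have : x = 0 := congrArg (fun h => h (⟨(u, x), hmem⟩ : ↥E)) hg0
    rw [this] at hx
    simpa using hx.symm
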